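/- There exists a constant C > 0 (depending only on the number field K) such that for every v ∈ K_S² with H(v) ≠ 0, there exists a unit ξ ∈ O_K^× with C^{-1} H(v)^{1/d} ≤ ||τ(ξ)·v|| ≤ C · H(v)^{1/d}, where ||·|| is the supremum over all σ ∈ S of the max-norm of v^σ. -/

import Mathlib

open NumberField
open scoped Classical
noncomputable section
set_option maxHeartbeats 1000000

/-- The height function on `K_S²`. -/
def heightKS (K : Type*) [Field K] [NumberField K]
    (v : InfinitePlace K → Fin 2 → ℂ) : ℝ :=
  (∏ w ∈ Finset.univ.filter (fun w : InfinitePlace K => w.IsReal),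
      max ‖v w 0‖ ‖v w 1‖) *
  (∏ w ∈ Finset.univ.filter (fun w : InfinitePlace K => w.IsComplex),
      (max ‖v w 0‖ ‖v w 1‖) ^ 2)

/-- The supremum norm on `K_S²`: the sup over places of the max-norm of the component. -/
def supNormKS (K : Type*) [Field K] [NumberField K]
    (v : InfinitePlace K → Fin 2 → ℂ) : ℝ :=
  Finset.univ.sup' Finset.univ_nonempty (fun w : InfinitePlace K => max ‖v w 0‖ ‖v w 1‖)

open NumberField.Units NumberField.Units.dirichletUnitTheorem NumberField.InfinitePlace Bornology in
/-- Cocompactness of the unit lattice: every target vector can be approximated within a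
uniform distance by the log embedding of a unit. -/
lemma unit_lattice_approx (K : Type*) [Field K] [NumberField K] :
    ∃ B : ℝ, 0 ≤ B ∧ ∀ t : ({w : InfinitePlace K // w ≠ (w₀ : InfinitePlace K)} → ℝ),
      ∃ ξ : (𝓞 K)ˣ, ∀ w : {w : InfinitePlace K // w ≠ (w₀ : InfinitePlace K)},
        |(logEmbedding K (Additive.ofMul ξ)) w - t w| ≤ B := by
  have hfree : Module.Free ℤ (unitLattice K) := ZLattice.module_free ℝ _
  let b₀ := Module.Free.chooseBasis ℤ (unitLattice K)
  let b := b₀.ofZLatticeBasis ℝ (unitLattice K)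
  obtain ⟨B, hB⟩ := isBounded_iff_forall_norm_le.mp (ZSpan.fundamentalDomain_isBounded b)
  refine ⟨max B 0, le_max_right _ _, fun t => ?_⟩
  obtain ⟨u, hu, -⟩ := ZSpan.exist_unique_vadd_mem_fundamentalDomain b (-t)
  have hmem : (u : {w : InfinitePlace K // w ≠ (w₀ : InfinitePlace K)} → ℝ) ∈ unitLattice K := by
    have heq : Submodule.span ℤ (Set.range ⇑b) = unitLattice K := b₀.ofZLatticeBasis_span ℝ
    exact heq.le u.2
  have hmem' : (u : {w : InfinitePlace K // w ≠ (w₀ : InfinitePlace K)} → ℝ) ∈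
      Submodule.map (logEmbedding K).toIntLinearMap ⊤ := hmem
  obtain ⟨y, -, hy⟩ := Submodule.mem_map.mp hmem'
  refine ⟨y.toMul, fun w => ?_⟩
  have h1 : ‖(u : {w : InfinitePlace K // w ≠ (w₀ : InfinitePlace K)} → ℝ) + (-t)‖ ≤ B := hB _ hu
  have h2 : |((u : {w : InfinitePlace K // w ≠ (w₀ : InfinitePlace K)} → ℝ) + (-t)) w| ≤ B := by
    simpa [Real.norm_eq_abs] using
      (norm_le_pi_norm ((u : {w : InfinitePlace K // w ≠ (w₀ : InfinitePlace K)} → ℝ) + (-t)) w).trans h1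
  have h3 : logEmbedding K (Additive.ofMul y.toMul) = (u : {w : InfinitePlace K // w ≠ (w₀ : InfinitePlace K)} → ℝ) := by
    simpa using hy
  rw [h3]
  refine le_trans ?_ (le_max_left B 0)
  simpa [sub_eq_add_neg] using h2

open NumberField.Units NumberField.Units.dirichletUnitTheorem NumberField.InfinitePlace in
/-- There is `C > 0` depending only on `K` such that every `v ∈ K_S²` with `H(v) ≠ 0` can be
rescaled by a unit `ξ` so that `C⁻¹ H(v)^{1/d} ≤ ‖τ(ξ)·v‖ ≤ C H(v)^{1/d}`. -/
theorem height_vs_norm (K : Type*) [Field K] [NumberField K] :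
    ∃ C : ℝ, 0 < C ∧
      ∀ v : InfinitePlace K → Fin 2 → ℂ, heightKS K v ≠ 0 →
        ∃ ξ : (𝓞 K)ˣ,
          C⁻¹ * (heightKS K v) ^ ((1 : ℝ) / (Module.finrank ℚ K)) ≤
              supNormKS K (fun w i => w.embedding (algebraMap (𝓞 K) K ξ) * v w i) ∧
            supNormKS K (fun w i => w.embedding (algebraMap (𝓞 K) K ξ) * v w i) ≤
              C * (heightKS K v) ^ ((1 : ℝ) / (Module.finrank ℚ K)) := by
  obtain ⟨B, hB0, hB⟩ := unit_lattice_approx K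
  set n : ℕ := Fintype.card (InfinitePlace K) with hn
  set B' : ℝ := (n + 1) * B with hB'
  have hB'0 : 0 ≤ B' := by positivity
  refine ⟨Real.exp B', Real.exp_pos _, fun v hH => ?_⟩
  set d : ℕ := Module.finrank ℚ K with hd
  have hd0 : 0 < (d : ℝ) := by
    have : 0 < d := Module.finrank_pos
    exact_mod_cast this
  set L : InfinitePlace K → ℝ := fun w => max ‖v w 0‖ ‖v w 1‖ with hLdef
  -- positivity of each factor
  have hL0 : ∀ w, 0 < L w := by
    intro w
    rcases lt_or_ge 0 (L w) with h | h
    · exact h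
    · exfalso
      apply hH
      have hLw : L w = 0 := le_antisymm h (le_max_of_le_left (norm_nonneg _))
      rw [heightKS]
      rcases isReal_or_isComplex w with hw | hw
      · rw [Finset.prod_eq_zero (Finset.mem_filter.mpr ⟨Finset.mem_univ w, hw⟩) hLw, zero_mul]
      · have h0 : max ‖v w 0‖ ‖v w 1‖ = 0 := hLw
        rw [Finset.prod_eq_zero (Finset.mem_filter.mpr ⟨Finset.mem_univ w, hw⟩)
          (by rw [h0]; norm_num), mul_zero]
  have hHpos : 0 < heightKS K v := by
    rw [heightKS]
    exact mul_pos (Finset.prod_pos fun w _ => hL0 w)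
      (Finset.prod_pos fun w _ => pow_pos (hL0 w) 2)
  -- log of the height
  have hmultR : ∀ w : InfinitePlace K, w.IsReal → ((mult w : ℝ)) = 1 := by
    intro w hw; rw [mult, if_pos hw]; norm_num
  have hmultC : ∀ w : InfinitePlace K, w.IsComplex → ((mult w : ℝ)) = 2 := by
    intro w hw; rw [mult, if_neg (not_isReal_iff_isComplex.mpr hw)]; norm_num
  have hlogH : Real.log (heightKS K v) = ∑ w, (mult w : ℝ) * Real.log (L w) := by
    rw [heightKS, Real.log_mul (Finset.prod_ne_zero_iff.mpr fun w _ => (hL0 w).ne')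
        (Finset.prod_ne_zero_iff.mpr fun w _ => (pow_pos (hL0 w) 2).ne'),
      Real.log_prod (fun w _ => (hL0 w).ne'),
      Real.log_prod (fun w _ => (pow_pos (hL0 w) 2).ne')]
    rw [← Finset.sum_filter_add_sum_filter_not Finset.univ (fun w : InfinitePlace K => w.IsReal)
      (fun w => (mult w : ℝ) * Real.log (L w))]
    congr 1
    · exact Finset.sum_congr rfl fun w hw => by
        rw [hmultR w (Finset.mem_filter.mp hw).2, one_mul]
    · rw [show (Finset.univ.filter (fun w : InfinitePlace K => ¬w.IsReal)) =
        Finset.univ.filter (fun w : InfinitePlace K => w.IsComplex) by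
          apply Finset.filter_congr; intro w _; simp [not_isReal_iff_isComplex]]
      exact Finset.sum_congr rfl fun w hw => by
        rw [Real.log_pow, hmultC w (Finset.mem_filter.mp hw).2]; push_cast; ring
  set μ : ℝ := Real.log (heightKS K v) / d with hμ
  set z : InfinitePlace K → ℝ := fun w => Real.log (L w) - μ with hzdef
  have hz : ∑ w, (mult w : ℝ) * z w = 0 := by
    have hsm : ∑ w : InfinitePlace K, (mult w : ℝ) = (d : ℝ) := by
      rw [hd, ← sum_mult_eq]; push_cast; rfl
    simp_rw [hzdef, mul_sub]
    rw [Finset.sum_sub_distrib, ← hlogH, ← Finset.sum_mul, hsm, hμ]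
    field_simp
    ring
  obtain ⟨ξ, hξ⟩ := hB (fun w => -((mult w.1 : ℝ) * z w.1))
  set ξK : K := algebraMap (𝓞 K) K (ξ : 𝓞 K) with hξK
  have hξne : ξK ≠ 0 := NumberField.Units.coe_ne_zero ξ
  set e : InfinitePlace K → ℝ := fun w => Real.log (w ξK) + z w with hedef
  -- sum of mult * log (w ξK) is zero
  have hsum0 : ∑ w, (mult w : ℝ) * Real.log (w ξK) = 0 := by
    have h := congrArg Real.log (prod_eq_abs_norm ξK)
    rw [show (Algebra.norm ℚ) ξK = (Algebra.norm ℚ) (ξ : K) from rfl] at h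
    rw [Real.log_prod (fun w _ => pow_ne_zero _ ((pos_iff.mpr hξne).ne'))] at h
    simp_rw [Real.log_pow] at h
    have hn1 : |Algebra.norm ℚ (ξ : K)| = 1 := _root_.NumberField.Units.norm K ξ
    rw [h, hn1]
    simp
  have hsumE : ∑ w, (mult w : ℝ) * e w = 0 := by
    simp_rw [hedef, mul_add]
    rw [Finset.sum_add_distrib, hsum0, hz, add_zero]
  have habs_le : ∀ w : InfinitePlace K, |e w| ≤ |(mult w : ℝ) * e w| := by
    intro w
    rw [abs_mul]
    nth_rw 1 [← one_mul |e w|]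
    refine mul_le_mul_of_nonneg_right ?_ (abs_nonneg _)
    rw [abs_of_nonneg (Nat.cast_nonneg _)]
    exact_mod_cast Nat.one_le_iff_ne_zero.mpr (mult_ne_zero (w := w))
  have hsmall : ∀ w : {w : InfinitePlace K // w ≠ (w₀ : InfinitePlace K)}, |(mult w.1 : ℝ) * e w.1| ≤ B := by
    intro w
    have h := hξ w
    rw [logEmbedding_component] at h
    have : (mult w.1 : ℝ) * Real.log (w.1 (ξ : K)) - -((mult w.1 : ℝ) * z w.1) =
        (mult w.1 : ℝ) * e w.1 := by rw [hedef, hξK]; ring_nf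
    rwa [this] at h
  -- key estimate for every place
  have key : ∀ w : InfinitePlace K, |e w| ≤ B' := by
    intro w
    by_cases hw : w = w₀
    · subst hw
      have hw0 : (mult (w₀ : InfinitePlace K) : ℝ) * e (w₀ : InfinitePlace K) =
          - ∑ w : {w : InfinitePlace K // w ≠ (w₀ : InfinitePlace K)},
          (mult w.1 : ℝ) * e w.1 := by
        have h := hsumE
        rw [← Finset.insert_erase (Finset.mem_univ (w₀ : InfinitePlace K)),
          Finset.sum_insert (Finset.notMem_erase _ _)] at h
        have hsub : ∑ w ∈ Finset.univ.erase (w₀ : InfinitePlace K), (mult w : ℝ) * e w =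
            ∑ w : {w : InfinitePlace K // w ≠ (w₀ : InfinitePlace K)},
              (mult w.1 : ℝ) * e w.1 :=
          Finset.sum_subtype _ (fun w => ⟨Finset.ne_of_mem_erase, fun h =>
            Finset.mem_erase_of_ne_of_mem h (Finset.mem_univ w)⟩)
            (fun w => (mult w : ℝ) * e w)
        rw [hsub] at h
        linarith
      calc |e (w₀ : InfinitePlace K)| ≤
          |(mult (w₀ : InfinitePlace K) : ℝ) * e (w₀ : InfinitePlace K)| := habs_le _
        _ = |∑ w : {w : InfinitePlace K // w ≠ (w₀ : InfinitePlace K)}, (mult w.1 : ℝ) * e w.1| := by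
            rw [hw0, abs_neg]
        _ ≤ ∑ w : {w : InfinitePlace K // w ≠ (w₀ : InfinitePlace K)}, |(mult w.1 : ℝ) * e w.1| :=
            Finset.abs_sum_le_sum_abs _ _
        _ ≤ ∑ _w : {w : InfinitePlace K // w ≠ (w₀ : InfinitePlace K)}, B :=
            Finset.sum_le_sum fun w _ => hsmall w
        _ = (Fintype.card {w : InfinitePlace K // w ≠ (w₀ : InfinitePlace K)} : ℝ) * B := by
            rw [Finset.sum_const, Finset.card_univ, nsmul_eq_mul]
        _ ≤ B' := by
            rw [hB']
            refine mul_le_mul_of_nonneg_right ?_ hB0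
            have := Fintype.card_subtype_le (fun w : InfinitePlace K => w ≠ w₀)

            have h' : (Fintype.card {w : InfinitePlace K // w ≠ (w₀ : InfinitePlace K)} : ℝ) ≤ (n : ℝ) := by
              exact_mod_cast this
            linarith
    · calc |e w| ≤ |(mult w : ℝ) * e w| := habs_le _
        _ ≤ B := hsmall ⟨w, hw⟩
        _ ≤ B' := by nlinarith [hB0]
  have hsup_eq : (fun w : InfinitePlace K =>
      max ‖(fun w i => w.embedding (algebraMap (𝓞 K) K ξ) * v w i) w 0‖
          ‖(fun w i => w.embedding (algebraMap (𝓞 K) K ξ) * v w i) w 1‖) =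
      fun w : InfinitePlace K => w ξK * L w := by
    funext w
    simp only [norm_mul, norm_embedding_eq]
    rw [hLdef, mul_max_of_nonneg _ _ (apply_nonneg w ξK)]
  have hterm : ∀ w : InfinitePlace K, w ξK * L w = Real.exp (μ + e w) := by
    intro w
    have h1 : μ + e w = Real.log (w ξK) + Real.log (L w) := by
      rw [hedef, hzdef]; ring
    rw [h1, Real.exp_add, Real.exp_log (pos_iff.mpr hξne), Real.exp_log (hL0 w)]
  have hrpow : (heightKS K v) ^ ((1 : ℝ) / (d : ℝ)) = Real.exp μ := by
    rw [Real.rpow_def_of_pos hHpos, hμ, mul_one_div]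
  refine ⟨ξ, ?_, ?_⟩
  · calc (Real.exp B')⁻¹ * (heightKS K v) ^ ((1 : ℝ) / (d : ℝ))
        = Real.exp (μ - B') := by
          rw [hrpow, ← Real.exp_neg, ← Real.exp_add]; ring_nf
      _ ≤ (w₀ : InfinitePlace K) ξK * L (w₀ : InfinitePlace K) := by
          rw [hterm]
          exact Real.exp_le_exp.mpr (by linarith [(abs_le.mp (key (w₀ : InfinitePlace K))).1])
      _ ≤ supNormKS K (fun w i => w.embedding (algebraMap (𝓞 K) K ξ) * v w i) := by
          rw [supNormKS, hsup_eq]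
          exact Finset.le_sup' (fun w : InfinitePlace K => w ξK * L w)
            (Finset.mem_univ (w₀ : InfinitePlace K))
  · calc supNormKS K (fun w i => w.embedding (algebraMap (𝓞 K) K ξ) * v w i)
        ≤ Real.exp (μ + B') := by
          rw [supNormKS, hsup_eq]
          refine Finset.sup'_le _ _ fun w _ => ?_
          rw [hterm]
          exact Real.exp_le_exp.mpr (by linarith [(abs_le.mp (key w)).2])
      _ = Real.exp B' * (heightKS K v) ^ ((1 : ℝ) / (d : ℝ)) := by
          rw [hrpow, ← Real.exp_add]; ring_nf
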